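/- Let (R,m) and (S,n) be one-dimensional Cohen-Macaulay local rings with common infinite residue field k, both with fractional canonical ideals K and L respectively, and neither R nor S a DVR. Let A = R ×_k S be the fiber product, with fractional canonical ideal X = (K × L) + A·ψ where ψ = (g₁, g₂), K:m = K + Rg₁, L:n = L + Sg₂. If R and S are both non-Gorenstein, then X² = X³ if and only if K² = K³ and L² = L³; if R is Gorenstein (K = R) and S non-Gorenstein, then X² = X³ if and only if L² = L³. -/

import Mathlib

open IsLocalRing

/-- The length of a module, as the Krull dimension of its submodule lattice. -/
noncomputable def moduleLength (R M : Type*) [Ring R] [AddCommGroup M] [Module R M] : ℕ∞ :=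
  (Order.krullDim (Submodule R M)).unbotD 0

/-- `K` is a fractional canonical ideal of `R` (inside a total quotient ring `Q`):
`R ⊆ K ⊆ \bar R` and `K ≅ K_R`, the latter expressed through the Herzog–Kunz
double-annihilator characterization of canonical fractional ideals. -/
def IsFracCanonical (R Q : Type*) [CommRing R] [CommRing Q] [Algebra R Q]
    (K : Submodule R Q) : Prop :=
  K.FG ∧ (1 : Submodule R Q) ≤ K ∧
    K ≤ Subalgebra.toSubmodule (integralClosure R Q) ∧
    ∀ F : Submodule R Q, F.FG → (1 : Submodule R Q) ≤ F → K / (K / F) = F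

/-- The conductor ideal `𝔠 = R : R[K]` of `R`. -/
noncomputable def condIdeal (R Q : Type*) [CommRing R] [CommRing Q] [Algebra R Q]
    (K : Submodule R Q) : Ideal R :=
  Submodule.comap (Algebra.linearMap R Q)
    ((1 : Submodule R Q) / (Subalgebra.toSubmodule (Algebra.adjoin R (K : Set Q))))

set_option synthInstance.maxHeartbeats 1000000
set_option maxHeartbeats 1000000

section OneRing
variable {R : Type*} [CommRing R] [IsNoetherianRing R] [IsLocalRing R]

local notation "Q" => FractionRing R
local notation "ι" => Algebra.linearMap R (FractionRing R)

theorem lemA (hRdvr : ¬ ∃ h : IsDomain R, @IsDiscreteValuationRing R _ h) :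
    Submodule.map ι (maximalIdeal R) * ((1 : Submodule R Q) / Submodule.map ι (maximalIdeal R))
      ≤ Submodule.map ι (maximalIdeal R) := by
  set m' : Submodule R Q := Submodule.map ι (maximalIdeal R) with hm'
  by_contra hcon
  have hex : ∃ x ∈ m', ∃ y ∈ (1 : Submodule R Q) / m', ¬ x * y ∈ m' := by
    by_contra hforall
    push_neg at hforall
    exact hcon (Submodule.mul_le.2 hforall)
  obtain ⟨x, hx, y, hy, hxy⟩ := hex
  obtain ⟨t, ht, rfl⟩ := Submodule.mem_map.1 hx
  have hyx : y * (ι t) ∈ (1 : Submodule R Q) :=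
    (Submodule.mem_div_iff_forall_mul_mem.1 hy) _ (Submodule.mem_map.2 ⟨t, ht, rfl⟩)
  rw [mul_comm] at hyx
  obtain ⟨s, hs⟩ := Submodule.mem_one.1 hyx
  have hsm : s ∉ maximalIdeal R := by
    intro hsmem
    exact hxy (hs ▸ Submodule.mem_map.2 ⟨s, hsmem, rfl⟩)
  have hsu : IsUnit s := by
    by_contra hnu
    exact hsm ((mem_maximalIdeal s).2 (mem_nonunits_iff.2 hnu))
  have hinj : Function.Injective (algebraMap R Q) := IsFractionRing.injective R Q
  have hmspan : maximalIdeal R = Ideal.span {t} := by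
    apply le_antisymm
    · intro w hw
      have hyw : y * (ι w) ∈ (1 : Submodule R Q) :=
        (Submodule.mem_div_iff_forall_mul_mem.1 hy) _ (Submodule.mem_map.2 ⟨w, hw, rfl⟩)
      obtain ⟨c, hc⟩ := Submodule.mem_one.1 hyw
      have hws : w * s = c * t := by
        apply hinj
        have h1 : algebraMap R Q (w * s) = (algebraMap R Q w) * ((ι t) * y) := by
          rw [map_mul, hs]
        have h2 : algebraMap R Q (c * t) = (y * (ι w)) * (algebraMap R Q t) := by
          rw [map_mul, hc]
        rw [h1, h2]; simp only [Algebra.linearMap_apply]; ring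
      obtain ⟨u, hu⟩ := hsu
      refine Ideal.mem_span_singleton'.2 ⟨(u⁻¹ : Rˣ) * c, ?_⟩
      have key : (u : R) * w = c * t := by rw [hu, mul_comm]; exact hws
      calc ((u⁻¹ : Rˣ) : R) * c * t = ((u⁻¹ : Rˣ) : R) * (c * t) := by ring
        _ = ((u⁻¹ : Rˣ) : R) * ((u : R) * w) := by rw [key]
        _ = w := by rw [← mul_assoc, Units.inv_mul, one_mul]
    · rw [Ideal.span_le, Set.singleton_subset_iff]; exact ht
  have htnzd : t ∈ nonZeroDivisors R := by
    rw [mem_nonZeroDivisors_iff_right]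
    intro a ha
    have h0 : algebraMap R Q (a * s) = 0 := by
      rw [map_mul, hs]
      have h1 : algebraMap R Q a * algebraMap R Q t = 0 := by
        rw [← map_mul, ha, map_zero]
      calc algebraMap R Q a * ((ι t) * y)
          = (algebraMap R Q a * algebraMap R Q t) * y := by
            simp only [Algebra.linearMap_apply]; ring
        _ = 0 := by rw [h1, zero_mul]
    have has : a * s = 0 := hinj (by rw [h0, map_zero])
    obtain ⟨u, hu⟩ := hsu
    have : a = a * s * ((u⁻¹ : Rˣ) : R) := by rw [← hu, mul_assoc, Units.mul_inv, mul_one]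
    rw [this, has, zero_mul]
  have htne : t ≠ 0 := fun h => one_ne_zero (mem_nonZeroDivisors_iff_right.1 htnzd 1 (by rw [h, mul_zero]))
  have hkrull : ⨅ i, (maximalIdeal R) ^ i = ⊥ :=
    Ideal.iInf_pow_eq_bot_of_isLocalRing _ (Ideal.IsMaximal.ne_top (maximalIdeal.isMaximal R))
  classical
  have hrep : ∀ a : R, a ≠ 0 → ∃ (n : ℕ) (c : R), IsUnit c ∧ a = c * t ^ n := by
    intro a ha
    have hex2 : ∃ n, a ∉ (maximalIdeal R) ^ n := by
      by_contra hall
      push_neg at hall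
      have : a ∈ (⊥ : Ideal R) := hkrull ▸ (Submodule.mem_iInf _).2 hall
      exact ha ((Submodule.mem_bot R).1 this)
    set n := Nat.find hex2 with hn_def
    have hn : a ∉ (maximalIdeal R) ^ n := Nat.find_spec hex2
    have hnpos : n ≠ 0 := by
      intro h0
      exact hn (by rw [h0, pow_zero, Ideal.one_eq_top]; exact Submodule.mem_top)
    obtain ⟨n', hnn'⟩ : ∃ n', n = n' + 1 :=
      ⟨n - 1, (Nat.succ_pred_eq_of_pos (Nat.pos_of_ne_zero hnpos)).symm⟩
    have hmem : a ∈ (maximalIdeal R) ^ n' :=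
      not_not.1 (Nat.find_min hex2 (by omega))
    rw [hmspan, Ideal.span_singleton_pow] at hmem
    obtain ⟨c, hc⟩ := Ideal.mem_span_singleton'.1 hmem
    refine ⟨n', c, ?_, hc.symm⟩
    by_contra hcu
    have hcm : c ∈ maximalIdeal R := (mem_maximalIdeal c).2 (mem_nonunits_iff.2 hcu)
    rw [hmspan] at hcm
    obtain ⟨d, hd⟩ := Ideal.mem_span_singleton'.1 hcm
    apply hn
    rw [hnn', hmspan, Ideal.span_singleton_pow]
    exact Ideal.mem_span_singleton'.2 ⟨d, by rw [← hc, ← hd]; ring⟩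
  have hnzd : ∀ a b : R, a * b = 0 → a = 0 ∨ b = 0 := by
    intro a b hab
    by_contra hcon2
    push_neg at hcon2
    obtain ⟨n, c, hcu, hceq⟩ := hrep a hcon2.1
    obtain ⟨mm, d, hdu, hdeq⟩ := hrep b hcon2.2
    have hzero : (c * d) * t ^ (n + mm) = 0 := by
      rw [← hab, hceq, hdeq]; ring
    have hcd : c * d = 0 := mem_nonZeroDivisors_iff_right.1 (pow_mem htnzd (n + mm)) _ hzero
    obtain ⟨u, hu⟩ := hcu
    have hd0 : d = 0 := by
      have hdd : d = ((u⁻¹ : Rˣ) : R) * (c * d) := by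
        rw [← hu, ← mul_assoc, Units.inv_mul, one_mul]
      rw [hdd, hcd, mul_zero]
    exact hdu.ne_zero hd0
  haveI : NoZeroDivisors R := ⟨fun {a b} h => hnzd a b h⟩
  haveI : IsDomain R := NoZeroDivisors.to_isDomain R
  haveI hpir : IsPrincipalIdealRing R := by
    constructor
    intro I
    by_cases hIbot : I = ⊥
    · exact ⟨⟨0, by rw [hIbot]; exact (Ideal.span_singleton_eq_bot.2 rfl).symm⟩⟩
    have hex3 : ∃ n, ¬ I ≤ (maximalIdeal R) ^ n := by
      by_contra hall
      push_neg at hall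
      exact hIbot (le_bot_iff.1 (hkrull ▸ le_iInf hall))
    set n := Nat.find hex3 with hn_def
    have hn : ¬ I ≤ (maximalIdeal R) ^ n := Nat.find_spec hex3
    have hnpos : n ≠ 0 := by
      intro h0
      exact hn (by rw [h0, pow_zero, Ideal.one_eq_top]; exact le_top)
    obtain ⟨n', hnn'⟩ : ∃ n', n = n' + 1 :=
      ⟨n - 1, (Nat.succ_pred_eq_of_pos (Nat.pos_of_ne_zero hnpos)).symm⟩
    have hIle : I ≤ (maximalIdeal R) ^ n' :=
      not_not.1 (Nat.find_min hex3 (by omega))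
    obtain ⟨a, haI, han⟩ := SetLike.not_le_iff_exists.1 hn
    have hmem : a ∈ (maximalIdeal R) ^ n' := hIle haI
    rw [hmspan, Ideal.span_singleton_pow] at hmem
    obtain ⟨c, hc⟩ := Ideal.mem_span_singleton'.1 hmem
    have hcu : IsUnit c := by
      by_contra hcu
      have hcm : c ∈ maximalIdeal R := (mem_maximalIdeal c).2 (mem_nonunits_iff.2 hcu)
      rw [hmspan] at hcm
      obtain ⟨d, hd⟩ := Ideal.mem_span_singleton'.1 hcm
      apply han
      rw [hnn', hmspan, Ideal.span_singleton_pow]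
      exact Ideal.mem_span_singleton'.2 ⟨d, by rw [← hc, ← hd]; ring⟩
    refine ⟨⟨t ^ n', le_antisymm ?_ ?_⟩⟩
    · intro z hz
      have := hIle hz
      rwa [hmspan, Ideal.span_singleton_pow] at this
    · refine (Ideal.span_singleton_le_iff_mem I).2 ?_
      obtain ⟨u, hu⟩ := hcu
      have : t ^ n' = ((u⁻¹ : Rˣ) : R) * a := by
        rw [← hc, ← hu, ← mul_assoc, Units.inv_mul, one_mul]
      rw [this]
      exact I.mul_mem_left _ haI
  haveI hdvr : IsDiscreteValuationRing R :=
    { not_a_field' := by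
        rw [hmspan]
        exact fun h => htne (Ideal.span_singleton_eq_bot.1 h) }
  exact hRdvr ⟨inferInstance, hdvr⟩

end OneRing

section OneRing2
variable {R : Type*} [CommRing R] [IsNoetherianRing R] [IsLocalRing R]

local notation "Q" => FractionRing R
local notation "ι" => Algebra.linearMap R (FractionRing R)

lemma div_one' (M : Submodule R Q) : M / 1 = M := by
  apply le_antisymm
  · intro x hx
    have := Submodule.mem_div_iff_forall_mul_mem.1 hx (1 : Q) (Submodule.one_le.1 le_rfl)
    rwa [mul_one] at this
  · intro x hx
    rw [Submodule.mem_div_iff_forall_mul_mem]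
    intro y hy
    obtain ⟨r, rfl⟩ := Submodule.mem_one.1 hy
    rw [mul_comm, ← Algebra.smul_def]
    exact M.smul_mem r hx

lemma div_div' (M N P : Submodule R Q) : M / N / P = M / (N * P) := by
  apply le_antisymm
  · intro x hx
    rw [Submodule.mem_div_iff_forall_mul_mem]
    intro z hz
    refine Submodule.mul_induction_on hz (fun n hn p hp => ?_) (fun a b ha hb => ?_)
    · have h1 := Submodule.mem_div_iff_forall_mul_mem.1 hx p hp
      have h2 := Submodule.mem_div_iff_forall_mul_mem.1 h1 n hn
      have : x * (n * p) = x * p * n := by ring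
      rwa [this]
    · have : x * (a + b) = x * a + x * b := by ring
      rw [this]; exact M.add_mem ha hb
  · intro x hx
    rw [Submodule.mem_div_iff_forall_mul_mem]
    intro p hp
    rw [Submodule.mem_div_iff_forall_mul_mem]
    intro n hn
    have := Submodule.mem_div_iff_forall_mul_mem.1 hx (n * p) (Submodule.mul_mem_mul hn hp)
    have e : x * (n * p) = x * p * n := by ring
    rwa [e] at this

lemma div_le_div_den (M : Submodule R Q) {N P : Submodule R Q} (h : N ≤ P) : M / P ≤ M / N :=
  fun x hx => Submodule.mem_div_iff_forall_mul_mem.2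
    (fun y hy => Submodule.mem_div_iff_forall_mul_mem.1 hx y (h hy))

lemma one_fg : (1 : Submodule R Q).FG :=
  ⟨{1}, by rw [Submodule.one_eq_span, Finset.coe_singleton]⟩

theorem sideForward
    (K : Submodule R Q)
    (hKfg : K.FG) (hK1 : 1 ≤ K)
    (hKint : K ≤ Subalgebra.toSubmodule (integralClosure R Q))
    (hdual : ∀ F : Submodule R Q, F.FG → 1 ≤ F → K / (K / F) = F)
    (g₁ : Q) (hg₁mem : g₁ ∈ (1 : Submodule R Q) / Submodule.map ι (maximalIdeal R))
    (hg₁K : g₁ ∉ K)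
    (hKm : K / Submodule.map ι (maximalIdeal R) = K ⊔ Submodule.span R {g₁})
    (hKne : K ≠ 1)
    (hlemA : Submodule.map ι (maximalIdeal R) * ((1 : Submodule R Q) / Submodule.map ι (maximalIdeal R))
      ≤ Submodule.map ι (maximalIdeal R))
    (hW : (K ⊔ Submodule.span R {g₁}) * (K ⊔ Submodule.span R {g₁})
        = (K ⊔ Submodule.span R {g₁}) * (K ⊔ Submodule.span R {g₁}) * (K ⊔ Submodule.span R {g₁})) :
    K * K = K * K * K := by
  set m' : Submodule R Q := Submodule.map ι (maximalIdeal R) with hm'def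
  set G : Submodule R Q := Submodule.span R {g₁} with hGdef
  set W : Submodule R Q := K ⊔ G with hWdef
  set C : Submodule R Q := (1 : Submodule R Q) / K with hCdef
  have hinj : Function.Injective (algebraMap R Q) := IsFractionRing.injective R Q
  have hm'le1 : m' ≤ (1 : Submodule R Q) := by
    intro x hx
    obtain ⟨t, _, rfl⟩ := Submodule.mem_map.1 hx
    exact Submodule.mem_one.2 ⟨t, rfl⟩
  -- step 1 : K / K = 1
  have hKK1 : K / K = 1 := by
    have h := hdual 1 one_fg le_rfl
    rwa [div_one'] at h
  -- step 2 : C = K / (K * K)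
  have hCeq : C = K / (K * K) := by
    rw [hCdef, ← hKK1, div_div']
  -- step 3 : C * K ≤ m'
  have hCK_m : C * K ≤ m' := by
    by_contra hcon
    have hex : ∃ x ∈ C, ∃ k ∈ K, ¬ x * k ∈ m' := by
      by_contra hforall
      push_neg at hforall
      exact hcon (Submodule.mul_le.2 hforall)
    obtain ⟨x, hx, k, hk, hxk⟩ := hex
    have hxk1 : x * k ∈ (1 : Submodule R Q) :=
      Submodule.mem_div_iff_forall_mul_mem.1 hx k hk
    obtain ⟨s, hs⟩ := Submodule.mem_one.1 hxk1
    have hsu : IsUnit s := by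
      by_contra hnu
      exact hxk (hs ▸ Submodule.mem_map.2 ⟨s, (mem_maximalIdeal s).2 (mem_nonunits_iff.2 hnu), rfl⟩)
    obtain ⟨u, hu⟩ := hsu
    -- K = span {k}
    have hKk : K = Submodule.span R {k} := by
      apply le_antisymm
      · intro z hz
        have hxz : x * z ∈ (1 : Submodule R Q) :=
          Submodule.mem_div_iff_forall_mul_mem.1 hx z hz
        obtain ⟨c, hc⟩ := Submodule.mem_one.1 hxz
        refine Submodule.mem_span_singleton.2 ⟨((u⁻¹ : Rˣ) : R) * c, ?_⟩
        have e1 : algebraMap R Q s * z = algebraMap R Q c * k := by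
          rw [hs, hc]; ring
        calc (((u⁻¹ : Rˣ) : R) * c) • k
            = algebraMap R Q ((u⁻¹ : Rˣ) : R) * (algebraMap R Q c * k) := by
              rw [Algebra.smul_def, map_mul]; ring
          _ = algebraMap R Q ((u⁻¹ : Rˣ) : R) * (algebraMap R Q s * z) := by rw [e1]
          _ = algebraMap R Q (((u⁻¹ : Rˣ) : R) * s) * z := by rw [map_mul]; ring
          _ = z := by rw [← hu, Units.inv_mul, map_one, one_mul]
      · rw [Submodule.span_le, Set.singleton_subset_iff]; exact hk
    have h1K : (1 : Q) ∈ K := Submodule.one_le.1 hK1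
    obtain ⟨a, ha⟩ := Submodule.mem_span_singleton.1 (hKk ▸ h1K)
    by_cases hau : IsUnit a
    · -- K = 1, contradiction
      obtain ⟨v, hv⟩ := hau
      have hk1 : k ∈ (1 : Submodule R Q) := by
        refine Submodule.mem_one.2 ⟨((v⁻¹ : Rˣ) : R), ?_⟩
        have : algebraMap R Q a * k = 1 := by
          rw [← ha, Algebra.smul_def]
        calc algebraMap R Q ((v⁻¹ : Rˣ) : R)
            = algebraMap R Q ((v⁻¹ : Rˣ) : R) * (algebraMap R Q a * k) := by
              rw [this, mul_one]
          _ = algebraMap R Q (((v⁻¹ : Rˣ) : R) * a) * k := by rw [map_mul]; ring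
          _ = k := by rw [← hv, Units.inv_mul, map_one, one_mul]
      apply hKne
      apply le_antisymm _ hK1
      rw [hKk, Submodule.span_le, Set.singleton_subset_iff]
      exact hk1
    · -- a ∈ m, k integral, contradiction
      have ham : a ∈ maximalIdeal R := (mem_maximalIdeal a).2 (mem_nonunits_iff.2 hau)
      have hak : algebraMap R Q a * k = 1 := by rw [← ha, Algebra.smul_def]
      have hkint : IsIntegral R k := hKint hk
      obtain ⟨p, hpmonic, hpeval⟩ := hkint
      set n := p.natDegree with hndef
      have hnpos : n ≠ 0 := by
        intro h0
        have : p = 1 := (Polynomial.Monic.natDegree_eq_zero hpmonic).1 h0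
        rw [this] at hpeval
        simp only [Polynomial.eval₂_one] at hpeval
        exact one_ne_zero hpeval
      have hsum : (0 : Q) = ∑ i ∈ Finset.range (n + 1), p.coeff i • k ^ i := by
        rw [← hpeval, Polynomial.eval₂_eq_sum_range]
        simp only [Algebra.smul_def]
        rfl
      -- multiply by (algebraMap a)^n
      have hki : ∀ i ∈ Finset.range (n + 1),
          (p.coeff i • k ^ i) * (algebraMap R Q a) ^ n = algebraMap R Q (p.coeff i * a ^ (n - i)) := by
        intro i hi
        have hin : i ≤ n := by
          have := Finset.mem_range.1 hi; omega
        have e : (algebraMap R Q a) ^ n = (algebraMap R Q a) ^ i * (algebraMap R Q a) ^ (n - i) := by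
          rw [← pow_add]
          congr 1
          omega
        rw [Algebra.smul_def, e]
        have e2 : k ^ i * (algebraMap R Q a) ^ i = 1 := by
          rw [← mul_pow]
          rw [mul_comm k (algebraMap R Q a), hak, one_pow]
        calc algebraMap R Q (p.coeff i) * k ^ i *
              ((algebraMap R Q a) ^ i * (algebraMap R Q a) ^ (n - i))
            = algebraMap R Q (p.coeff i) * (k ^ i * (algebraMap R Q a) ^ i) *
              (algebraMap R Q a) ^ (n - i) := by ring
          _ = algebraMap R Q (p.coeff i) * (algebraMap R Q a) ^ (n - i) := by
              rw [e2, mul_one]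
          _ = algebraMap R Q (p.coeff i * a ^ (n - i)) := by
              rw [map_mul, map_pow]
      have hzero : algebraMap R Q (∑ i ∈ Finset.range (n + 1), p.coeff i * a ^ (n - i)) = 0 := by
        rw [map_sum]
        have : ∑ i ∈ Finset.range (n + 1), algebraMap R Q (p.coeff i * a ^ (n - i))
            = (∑ i ∈ Finset.range (n + 1), p.coeff i • k ^ i) * (algebraMap R Q a) ^ n := by
          rw [Finset.sum_mul]
          exact Finset.sum_congr rfl (fun i hi => (hki i hi).symm)
        rw [this, ← hsum, zero_mul]
      have hsum0 : ∑ i ∈ Finset.range (n + 1), p.coeff i * a ^ (n - i) = 0 :=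
        hinj (by rw [hzero, map_zero])
      rw [Finset.sum_range_succ] at hsum0
      have hcn : p.coeff n = 1 := hpmonic.coeff_natDegree
      rw [hcn, Nat.sub_self, pow_zero, one_mul] at hsum0
      have h1m : (1 : R) ∈ maximalIdeal R := by
        have : (1 : R) = -∑ i ∈ Finset.range n, p.coeff i * a ^ (n - i) := by
          linear_combination hsum0
        rw [this]
        refine Submodule.neg_mem _ (Ideal.sum_mem _ (fun i hi => ?_))
        have hin : i < n := Finset.mem_range.1 hi
        have : a ^ (n - i) ∈ maximalIdeal R := by
          obtain ⟨j, hj⟩ : ∃ j, n - i = j + 1 := ⟨n - i - 1, by omega⟩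
          rw [hj, pow_succ]
          exact Ideal.mul_mem_left _ _ ham
        exact Ideal.mul_mem_left _ _ this
      exact (Ideal.IsMaximal.ne_top (maximalIdeal.isMaximal R))
        (Ideal.eq_top_of_isUnit_mem _ h1m isUnit_one)
  -- step 4 : C ≤ m'
  have hCm : C ≤ m' := by
    intro x hx
    have h1K : (1 : Q) ∈ K := Submodule.one_le.1 hK1
    have : x * 1 ∈ C * K := Submodule.mul_mem_mul hx h1K
    rw [mul_one] at this
    exact hCK_m this
  -- step 6 : C * W ≤ m'
  have hCW : C * W ≤ m' := by
    rw [hWdef, Submodule.mul_sup]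
    refine sup_le hCK_m (Submodule.mul_le.2 (fun x hx y hy => ?_))
    obtain ⟨a, rfl⟩ := Submodule.mem_span_singleton.1 hy
    rw [mul_smul_comm]
    refine Submodule.smul_mem _ a ?_
    exact hlemA (Submodule.mul_mem_mul (hCm hx) hg₁mem)
  -- step 7 : K / W = m'
  have hKW : K / W = m' := by
    apply le_antisymm
    · intro x hx
      have hx1 : x ∈ (1 : Submodule R Q) := by
        rw [← hKK1]
        exact div_le_div_den K (le_sup_left : K ≤ W) hx
      obtain ⟨c, hc⟩ := Submodule.mem_one.1 hx1
      have hg₁W : g₁ ∈ W := (le_sup_right : G ≤ W) (Submodule.mem_span_singleton_self g₁)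
      have hxg : x * g₁ ∈ K := Submodule.mem_div_iff_forall_mul_mem.1 hx g₁ hg₁W
      by_cases hcu : IsUnit c
      · exfalso
        obtain ⟨v, hv⟩ := hcu
        apply hg₁K
        have : g₁ = ((v⁻¹ : Rˣ) : R) • (x * g₁) := by
          rw [Algebra.smul_def, ← hc, ← mul_assoc, ← map_mul]
          rw [show ((v⁻¹ : Rˣ) : R) * c = 1 by rw [← hv, Units.inv_mul], map_one, one_mul]
        rw [this]
        exact K.smul_mem _ hxg
      · rw [← hc]
        exact Submodule.mem_map.2 ⟨c, (mem_maximalIdeal c).2 (mem_nonunits_iff.2 hcu), rfl⟩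
    · intro x hx
      rw [Submodule.mem_div_iff_forall_mul_mem]
      intro y hy
      obtain ⟨k, hkK, z, hz, rfl⟩ := Submodule.mem_sup.1 (hWdef ▸ hy)
      obtain ⟨a, rfl⟩ := Submodule.mem_span_singleton.1 hz
      have h1 : x * k ∈ K := by
        have : x * k ∈ (1 : Submodule R Q) * K := Submodule.mul_mem_mul (hm'le1 hx) hkK
        rwa [one_mul] at this
      have h2 : x * (a • g₁) ∈ K := by
        rw [mul_smul_comm]
        refine K.smul_mem a (hK1 (hm'le1 (hlemA (Submodule.mul_mem_mul hx hg₁mem))))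
      have : x * (k + a • g₁) = x * k + x * (a • g₁) := by ring
      rw [this]
      exact K.add_mem h1 h2
  -- step 8 : m' / W = m' / (W * W)
  have hmW : m' / W = m' / (W * W) := by
    have e1 : m' / W = K / (W * W) := by rw [← hKW, div_div']
    have e2 : m' / (W * W) = K / (W * (W * W)) := by rw [← hKW, div_div']
    rw [e1, e2]
    congr 1
    rw [← mul_assoc, ← hW]
  -- steps 9-11 : C * (K*K) ≤ 1
  have hCKK : ∀ x ∈ C, ∀ z ∈ K * K, x * z ∈ (1 : Submodule R Q) := by
    intro x hx z hz
    have hx2 : x ∈ m' / (W * W) := by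
      rw [← hmW]
      exact Submodule.mem_div_iff_forall_mul_mem.2
        (fun y hy => hCW (Submodule.mul_mem_mul hx hy))
    have hzW : z ∈ W * W :=
      mul_le_mul' (le_sup_left : K ≤ W) (le_sup_left : K ≤ W) hz
    exact hm'le1 (Submodule.mem_div_iff_forall_mul_mem.1 hx2 z hzW)
  -- step 12 : C * K ≤ C
  have hCKC : C * K ≤ C := by
    refine Submodule.mul_le.2 (fun x hx k hk => ?_)
    rw [hCdef]
    refine Submodule.mem_div_iff_forall_mul_mem.2 (fun k' hk' => ?_)
    have : x * k * k' = x * (k * k') := by ring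
    rw [this]
    exact hCKK x hx _ (Submodule.mul_mem_mul hk hk')
  -- step 13 : C * (K*K*K) ≤ K
  have hCK3 : C * (K * K * K) ≤ K := by
    have e : C * (K * K * K) = ((C * K) * K) * K := by ring
    rw [e]
    calc ((C * K) * K) * K ≤ (C * K) * K := mul_le_mul_left (mul_le_mul_left hCKC _) _
      _ ≤ C * K := mul_le_mul_left hCKC _
      _ ≤ C := hCKC
      _ ≤ m' := hCm
      _ ≤ 1 := hm'le1
      _ ≤ K := hK1
  -- step 14-15 : duality
  have hKKfg : (K * K).FG := hKfg.mul hKfg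
  have hKKKfg : (K * K * K).FG := hKKfg.mul hKfg
  have h1KK : (1 : Submodule R Q) ≤ K * K := by
    have : (1 : Submodule R Q) = 1 * 1 := (one_mul 1).symm
    rw [this]
    exact mul_le_mul' hK1 hK1
  have h1KKK : (1 : Submodule R Q) ≤ K * K * K := by
    have : (1 : Submodule R Q) = 1 * 1 := (one_mul 1).symm
    rw [this]
    exact mul_le_mul' h1KK hK1
  have hd2 := hdual (K * K) hKKfg h1KK
  have hd3 := hdual (K * K * K) hKKKfg h1KKK
  have hCle : C ≤ K / (K * K * K) := by
    intro x hx
    exact Submodule.mem_div_iff_forall_mul_mem.2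
      (fun z hz => hCK3 (Submodule.mul_mem_mul hx hz))
  have hfinal : K * K * K ≤ K * K := by
    calc K * K * K = K / (K / (K * K * K)) := hd3.symm
      _ ≤ K / C := div_le_div_den K hCle
      _ = K / (K / (K * K)) := by rw [hCeq]
      _ = K * K := hd2
  have hup : K * K * 1 ≤ K * K * K := mul_le_mul' le_rfl hK1
  rw [mul_one] at hup
  exact le_antisymm hup hfinal

end OneRing2

section OneRing3
variable {R : Type*} [CommRing R] [IsNoetherianRing R] [IsLocalRing R]

local notation "Q" => FractionRing R
local notation "ι" => Algebra.linearMap R (FractionRing R)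

theorem sideBack
    (K : Submodule R Q) (hK1 : 1 ≤ K)
    (g₁ : Q) (hg₁mem : g₁ ∈ (1 : Submodule R Q) / Submodule.map ι (maximalIdeal R))
    (hKm : K / Submodule.map ι (maximalIdeal R) = K ⊔ Submodule.span R {g₁})
    (hlemA : Submodule.map ι (maximalIdeal R) * ((1 : Submodule R Q) / Submodule.map ι (maximalIdeal R))
      ≤ Submodule.map ι (maximalIdeal R)) :
    Submodule.span R {g₁} * K ≤ K ⊔ Submodule.span R {g₁} ∧
    Submodule.span R {g₁} * Submodule.span R {g₁} ≤ K ⊔ Submodule.span R {g₁} ∧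
    g₁ * g₁ * g₁ ∈ K ⊔ Submodule.span R {g₁} := by
  set m' : Submodule R Q := Submodule.map ι (maximalIdeal R) with hm'def
  have hm'le1 : m' ≤ (1 : Submodule R Q) := by
    intro x hx
    obtain ⟨t, _, rfl⟩ := Submodule.mem_map.1 hx
    exact Submodule.mem_one.2 ⟨t, rfl⟩
  have honediv : (1 : Submodule R Q) / m' ≤ K ⊔ Submodule.span R {g₁} := by
    rw [← hKm]
    intro x hx
    exact Submodule.mem_div_iff_forall_mul_mem.2
      (fun y hy => hK1 (Submodule.mem_div_iff_forall_mul_mem.1 hx y hy))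
  have hg₁m : ∀ y ∈ m', g₁ * y ∈ m' := by
    intro y hy
    have h := Submodule.mul_mem_mul hy hg₁mem
    rw [mul_comm y g₁] at h
    exact hlemA h
  have hsq : g₁ * g₁ ∈ (1 : Submodule R Q) / m' := by
    refine Submodule.mem_div_iff_forall_mul_mem.2 (fun y hy => ?_)
    have e : g₁ * g₁ * y = g₁ * (g₁ * y) := by ring
    rw [e]
    exact Submodule.mem_div_iff_forall_mul_mem.1 hg₁mem _ (hg₁m y hy)
  have hcube : g₁ * g₁ * g₁ ∈ (1 : Submodule R Q) / m' := by
    refine Submodule.mem_div_iff_forall_mul_mem.2 (fun y hy => ?_)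
    have e : g₁ * g₁ * g₁ * y = (g₁ * g₁) * (g₁ * y) := by ring
    rw [e]
    exact Submodule.mem_div_iff_forall_mul_mem.1 hsq _ (hg₁m y hy)
  refine ⟨?_, ?_, honediv hcube⟩
  · refine Submodule.mul_le.2 (fun x hx u hu => ?_)
    obtain ⟨a, rfl⟩ := Submodule.mem_span_singleton.1 hx
    have : g₁ * u ∈ K / m' := by
      refine Submodule.mem_div_iff_forall_mul_mem.2 (fun y hy => ?_)
      have e : g₁ * u * y = u * (g₁ * y) := by ring
      rw [e]
      obtain ⟨c, hc⟩ := Submodule.mem_one.1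
        (Submodule.mem_div_iff_forall_mul_mem.1 hg₁mem y hy)
      rw [← hc, mul_comm, ← Algebra.smul_def]
      exact K.smul_mem c hu
    rw [hKm] at this
    have e : a • g₁ * u = a • (g₁ * u) := by rw [smul_mul_assoc]
    rw [e]
    exact Submodule.smul_mem _ a this
  · refine Submodule.mul_le.2 (fun x hx y hy => ?_)
    obtain ⟨a, rfl⟩ := Submodule.mem_span_singleton.1 hx
    obtain ⟨b, rfl⟩ := Submodule.mem_span_singleton.1 hy
    have e : (a • g₁) * (b • g₁) = (a * b) • (g₁ * g₁) := by
      rw [smul_mul_assoc, mul_smul_comm, smul_smul]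
    rw [e]
    exact Submodule.smul_mem _ _ (honediv hsq)

end OneRing3


section FiberProduct

variable (R S : Type*) [CommRing R] [CommRing S]

/-- The subring of `R × S` underlying a fiber product `R ×_k S` acts on
`Q(R) × Q(S)`. -/
noncomputable instance fpAlgebra (A : Subring (R × S)) :
    Algebra ↥A (FractionRing R × FractionRing S) :=
  RingHom.toAlgebra
    (((algebraMap R (FractionRing R)).prodMap (algebraMap S (FractionRing S))).comp
      A.subtype)

end FiberProduct

section FPHelpers

variable {R S : Type*} [CommRing R] [CommRing S] (A : Subring (R × S))




lemma fp_smul_def (a : ↥A) (x : FractionRing R × FractionRing S) :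
    a • x = (algebraMap R (FractionRing R) (a : R × S).1 * x.1,
             algebraMap S (FractionRing S) (a : R × S).2 * x.2) := by
  rw [Algebra.smul_def, RingHom.algebraMap_toAlgebra]
  rfl

/-- The product submodule `U × V` as an `A`-submodule of `Q(R) × Q(S)`. -/
def Psub (U : Submodule R (FractionRing R)) (V : Submodule S (FractionRing S)) :
    Submodule ↥A (FractionRing R × FractionRing S) where
  carrier := {p | p.1 ∈ U ∧ p.2 ∈ V}
  add_mem' := fun ha hb => ⟨U.add_mem ha.1 hb.1, V.add_mem ha.2 hb.2⟩
  zero_mem' := ⟨U.zero_mem, V.zero_mem⟩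
  smul_mem' := by
    intro c x hx
    rw [fp_smul_def]
    rw [← Algebra.smul_def, ← Algebra.smul_def]
    exact ⟨U.smul_mem _ hx.1, V.smul_mem _ hx.2⟩

lemma mem_Psub {U : Submodule R (FractionRing R)} {V : Submodule S (FractionRing S)}
    {p : FractionRing R × FractionRing S} :
    p ∈ Psub A U V ↔ p.1 ∈ U ∧ p.2 ∈ V := Iff.rfl

lemma Psub_mono {U U' : Submodule R (FractionRing R)} {V V' : Submodule S (FractionRing S)}
    (h1 : U ≤ U') (h2 : V ≤ V') : Psub A U V ≤ Psub A U' V' :=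
  fun _ hp => ⟨h1 hp.1, h2 hp.2⟩

lemma span_prodset (U : Submodule R (FractionRing R)) (V : Submodule S (FractionRing S)) :
    Submodule.span ↥A ((U : Set (FractionRing R)) ×ˢ (V : Set (FractionRing S))) = Psub A U V := by
  apply le_antisymm
  · rw [Submodule.span_le]
    exact fun p hp => ⟨hp.1, hp.2⟩
  · exact fun p hp => Submodule.subset_span (Set.mk_mem_prod hp.1 hp.2)

lemma Psub_sup (U U' : Submodule R (FractionRing R)) (V V' : Submodule S (FractionRing S)) :
    Psub A U V ⊔ Psub A U' V' = Psub A (U ⊔ U') (V ⊔ V') := by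
  apply le_antisymm
  · exact sup_le (Psub_mono A le_sup_left le_sup_left) (Psub_mono A le_sup_right le_sup_right)
  · intro p hp
    obtain ⟨u, hu, u', hu', he1⟩ := Submodule.mem_sup.1 hp.1
    obtain ⟨v, hv, v', hv', he2⟩ := Submodule.mem_sup.1 hp.2
    refine Submodule.mem_sup.2 ⟨(u, v), ⟨hu, hv⟩, (u', v'), ⟨hu', hv'⟩, ?_⟩
    ext
    · exact he1
    · exact he2

lemma Psub_mul (U U' : Submodule R (FractionRing R)) (V V' : Submodule S (FractionRing S)) :
    Psub A U V * Psub A U' V' = Psub A (U * U') (V * V') := by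
  apply le_antisymm
  · refine Submodule.mul_le.2 (fun x hx y hy => ?_)
    exact ⟨Submodule.mul_mem_mul hx.1 hy.1, Submodule.mul_mem_mul hx.2 hy.2⟩
  · intro p hp
    have key1 : ∀ z ∈ U * U', ((z, 0) : FractionRing R × FractionRing S) ∈ Psub A U V * Psub A U' V' := by
      intro z hz
      refine Submodule.mul_induction_on hz (fun m hm n hn => ?_) (fun x y hx hy => ?_)
      · have he : ((m * n, 0) : FractionRing R × FractionRing S) = (m, 0) * (n, 0) := by
          rw [Prod.mk_mul_mk, mul_zero]
        rw [he]
        exact Submodule.mul_mem_mul (⟨hm, V.zero_mem⟩ : (m, (0:FractionRing S)) ∈ Psub A U V)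
          (⟨hn, V'.zero_mem⟩ : (n, (0:FractionRing S)) ∈ Psub A U' V')
      · have he : ((x + y, 0) : FractionRing R × FractionRing S) = (x, 0) + (y, 0) := by
          rw [Prod.mk_add_mk, add_zero]
        rw [he]
        exact Submodule.add_mem _ hx hy
    have key2 : ∀ z ∈ V * V', ((0, z) : FractionRing R × FractionRing S) ∈ Psub A U V * Psub A U' V' := by
      intro z hz
      refine Submodule.mul_induction_on hz (fun m hm n hn => ?_) (fun x y hx hy => ?_)
      · have he : ((0, m * n) : FractionRing R × FractionRing S) = (0, m) * (0, n) := by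
          rw [Prod.mk_mul_mk, mul_zero]
        rw [he]
        exact Submodule.mul_mem_mul (⟨U.zero_mem, hm⟩ : ((0:FractionRing R), m) ∈ Psub A U V)
          (⟨U'.zero_mem, hn⟩ : ((0:FractionRing R), n) ∈ Psub A U' V')
      · have he : ((0, x + y) : FractionRing R × FractionRing S) = (0, x) + (0, y) := by
          rw [Prod.mk_add_mk, add_zero]
        rw [he]
        exact Submodule.add_mem _ hx hy
    have hp_eq : p = (p.1, 0) + (0, p.2) := by
      ext <;> simp
    rw [hp_eq]
    exact Submodule.add_mem _ (key1 p.1 hp.1) (key2 p.2 hp.2)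

lemma Psub_mul_span (U : Submodule R (FractionRing R)) (V : Submodule S (FractionRing S))
    (pq : FractionRing R × FractionRing S) :
    Psub A U V * Submodule.span ↥A {pq}
      = Psub A (Submodule.span R {pq.1} * U) (Submodule.span S {pq.2} * V) := by
  apply le_antisymm
  · refine Submodule.mul_le.2 (fun x hx y hy => ?_)
    obtain ⟨a, rfl⟩ := Submodule.mem_span_singleton.1 hy
    rw [mul_smul_comm]
    refine Submodule.smul_mem _ a ?_
    constructor
    · exact Submodule.mem_span_singleton_mul.2 ⟨x.1, hx.1, by rw [mul_comm]; rfl⟩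
    · exact Submodule.mem_span_singleton_mul.2 ⟨x.2, hx.2, by rw [mul_comm]; rfl⟩
  · intro z hz
    obtain ⟨u, hu, hu2⟩ := Submodule.mem_span_singleton_mul.1 hz.1
    obtain ⟨v, hv, hv2⟩ := Submodule.mem_span_singleton_mul.1 hz.2
    have he : z = (u, v) * pq := by
      ext
      · rw [Prod.fst_mul, ← hu2, mul_comm]
      · rw [Prod.snd_mul, ← hv2, mul_comm]
    rw [he]
    exact Submodule.mul_mem_mul (⟨hu, hv⟩ : (u, v) ∈ Psub A U V)
      (Submodule.subset_span rfl)

/-- First projection of an `A`-submodule, as an `R`-submodule. -/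
def proj1 (hA1 : ∀ r : R, ∃ s : S, (r, s) ∈ A)
    (N : Submodule ↥A (FractionRing R × FractionRing S)) : Submodule R (FractionRing R) where
  carrier := {x | ∃ p, p ∈ N ∧ Prod.fst p = x}
  zero_mem' := ⟨0, N.zero_mem, rfl⟩
  add_mem' := by
    rintro a b ⟨p, hp, rfl⟩ ⟨q, hq, rfl⟩
    exact ⟨p + q, N.add_mem hp hq, Prod.fst_add p q⟩
  smul_mem' := by
    rintro r x ⟨p, hp, rfl⟩
    obtain ⟨s, hs⟩ := hA1 r
    refine ⟨(⟨(r, s), hs⟩ : ↥A) • p, N.smul_mem _ hp, ?_⟩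
    rw [fp_smul_def]
    exact (Algebra.smul_def r p.1).symm

lemma mem_proj1 (hA1 : ∀ r : R, ∃ s : S, (r, s) ∈ A)
    (N : Submodule ↥A (FractionRing R × FractionRing S)) {x : FractionRing R} :
    x ∈ proj1 A hA1 N ↔ ∃ p, p ∈ N ∧ Prod.fst p = x := Iff.rfl

lemma proj1_Psub (hA1 : ∀ r : R, ∃ s : S, (r, s) ∈ A)
    (U : Submodule R (FractionRing R)) (V : Submodule S (FractionRing S)) :
    proj1 A hA1 (Psub A U V) = U := by
  apply le_antisymm
  · intro x hx
    obtain ⟨p, hp, rfl⟩ := (mem_proj1 A hA1 _).1 hx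
    exact hp.1
  · intro w hw
    exact (mem_proj1 A hA1 _).2 ⟨(w, 0), ⟨hw, V.zero_mem⟩, rfl⟩

lemma proj1_sup (hA1 : ∀ r : R, ∃ s : S, (r, s) ∈ A)
    (M N : Submodule ↥A (FractionRing R × FractionRing S)) :
    proj1 A hA1 (M ⊔ N) = proj1 A hA1 M ⊔ proj1 A hA1 N := by
  apply le_antisymm
  · intro x hx
    obtain ⟨p, hp, rfl⟩ := (mem_proj1 A hA1 _).1 hx
    obtain ⟨q, hq, q', hq', he⟩ := Submodule.mem_sup.1 hp
    refine Submodule.mem_sup.2 ⟨q.1, (mem_proj1 A hA1 _).2 ⟨q, hq, rfl⟩,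
      q'.1, (mem_proj1 A hA1 _).2 ⟨q', hq', rfl⟩, ?_⟩
    rw [← he, Prod.fst_add]
  · refine sup_le ?_ ?_ <;> intro x hx
    · obtain ⟨p, hp, rfl⟩ := (mem_proj1 A hA1 _).1 hx
      exact (mem_proj1 A hA1 _).2 ⟨p, (le_sup_left : _ ≤ M ⊔ N) hp, rfl⟩
    · obtain ⟨p, hp, rfl⟩ := (mem_proj1 A hA1 _).1 hx
      exact (mem_proj1 A hA1 _).2 ⟨p, (le_sup_right : _ ≤ M ⊔ N) hp, rfl⟩

lemma proj1_span_singleton (hA1 : ∀ r : R, ∃ s : S, (r, s) ∈ A)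
    (pq : FractionRing R × FractionRing S) :
    proj1 A hA1 (Submodule.span ↥A {pq}) = Submodule.span R {pq.1} := by
  apply le_antisymm
  · intro x hx
    obtain ⟨p, hp, rfl⟩ := (mem_proj1 A hA1 _).1 hx
    obtain ⟨a, rfl⟩ := Submodule.mem_span_singleton.1 hp
    rw [fp_smul_def]
    refine Submodule.mem_span_singleton.2 ⟨(a : R × S).1, ?_⟩
    rw [Algebra.smul_def]
  · rw [Submodule.span_le, Set.singleton_subset_iff]
    exact (mem_proj1 A hA1 _).2 ⟨pq, Submodule.subset_span rfl, rfl⟩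

lemma proj1_mul (hA1 : ∀ r : R, ∃ s : S, (r, s) ∈ A)
    (M N : Submodule ↥A (FractionRing R × FractionRing S)) :
    proj1 A hA1 (M * N) = proj1 A hA1 M * proj1 A hA1 N := by
  apply le_antisymm
  · intro x hx
    obtain ⟨p, hp, rfl⟩ := (mem_proj1 A hA1 _).1 hx
    refine Submodule.mul_induction_on hp (fun m hm n hn => ?_) (fun x y hx hy => ?_)
    · rw [Prod.fst_mul]
      exact Submodule.mul_mem_mul ((mem_proj1 A hA1 _).2 ⟨m, hm, rfl⟩)
        ((mem_proj1 A hA1 _).2 ⟨n, hn, rfl⟩)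
    · rw [Prod.fst_add]
      exact Submodule.add_mem _ hx hy
  · refine Submodule.mul_le.2 ?_
    intro x hx y hy
    obtain ⟨p, hp, rfl⟩ := (mem_proj1 A hA1 _).1 hx
    obtain ⟨q, hq, rfl⟩ := (mem_proj1 A hA1 _).1 hy
    exact (mem_proj1 A hA1 _).2 ⟨p * q, Submodule.mul_mem_mul hp hq, Prod.fst_mul p q⟩

/-- Second projection. -/
def proj2 (hA2 : ∀ s : S, ∃ r : R, (r, s) ∈ A)
    (N : Submodule ↥A (FractionRing R × FractionRing S)) : Submodule S (FractionRing S) where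
  carrier := {x | ∃ p, p ∈ N ∧ Prod.snd p = x}
  zero_mem' := ⟨0, N.zero_mem, rfl⟩
  add_mem' := by
    rintro a b ⟨p, hp, rfl⟩ ⟨q, hq, rfl⟩
    exact ⟨p + q, N.add_mem hp hq, Prod.snd_add p q⟩
  smul_mem' := by
    rintro s x ⟨p, hp, rfl⟩
    obtain ⟨r, hr⟩ := hA2 s
    refine ⟨(⟨(r, s), hr⟩ : ↥A) • p, N.smul_mem _ hp, ?_⟩
    rw [fp_smul_def]
    exact (Algebra.smul_def s p.2).symm

lemma mem_proj2 (hA2 : ∀ s : S, ∃ r : R, (r, s) ∈ A)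
    (N : Submodule ↥A (FractionRing R × FractionRing S)) {x : FractionRing S} :
    x ∈ proj2 A hA2 N ↔ ∃ p, p ∈ N ∧ Prod.snd p = x := Iff.rfl

lemma proj2_Psub (hA2 : ∀ s : S, ∃ r : R, (r, s) ∈ A)
    (U : Submodule R (FractionRing R)) (V : Submodule S (FractionRing S)) :
    proj2 A hA2 (Psub A U V) = V := by
  apply le_antisymm
  · intro x hx
    obtain ⟨p, hp, rfl⟩ := (mem_proj2 A hA2 _).1 hx
    exact hp.2
  · intro w hw
    exact (mem_proj2 A hA2 _).2 ⟨(0, w), ⟨U.zero_mem, hw⟩, rfl⟩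

lemma proj2_sup (hA2 : ∀ s : S, ∃ r : R, (r, s) ∈ A)
    (M N : Submodule ↥A (FractionRing R × FractionRing S)) :
    proj2 A hA2 (M ⊔ N) = proj2 A hA2 M ⊔ proj2 A hA2 N := by
  apply le_antisymm
  · intro x hx
    obtain ⟨p, hp, rfl⟩ := (mem_proj2 A hA2 _).1 hx
    obtain ⟨q, hq, q', hq', he⟩ := Submodule.mem_sup.1 hp
    refine Submodule.mem_sup.2 ⟨q.2, (mem_proj2 A hA2 _).2 ⟨q, hq, rfl⟩,
      q'.2, (mem_proj2 A hA2 _).2 ⟨q', hq', rfl⟩, ?_⟩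
    rw [← he, Prod.snd_add]
  · refine sup_le ?_ ?_ <;> intro x hx
    · obtain ⟨p, hp, rfl⟩ := (mem_proj2 A hA2 _).1 hx
      exact (mem_proj2 A hA2 _).2 ⟨p, (le_sup_left : _ ≤ M ⊔ N) hp, rfl⟩
    · obtain ⟨p, hp, rfl⟩ := (mem_proj2 A hA2 _).1 hx
      exact (mem_proj2 A hA2 _).2 ⟨p, (le_sup_right : _ ≤ M ⊔ N) hp, rfl⟩

lemma proj2_span_singleton (hA2 : ∀ s : S, ∃ r : R, (r, s) ∈ A)
    (pq : FractionRing R × FractionRing S) :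
    proj2 A hA2 (Submodule.span ↥A {pq}) = Submodule.span S {pq.2} := by
  apply le_antisymm
  · intro x hx
    obtain ⟨p, hp, rfl⟩ := (mem_proj2 A hA2 _).1 hx
    obtain ⟨a, rfl⟩ := Submodule.mem_span_singleton.1 hp
    rw [fp_smul_def]
    refine Submodule.mem_span_singleton.2 ⟨(a : R × S).2, ?_⟩
    rw [Algebra.smul_def]
  · rw [Submodule.span_le, Set.singleton_subset_iff]
    exact (mem_proj2 A hA2 _).2 ⟨pq, Submodule.subset_span rfl, rfl⟩

lemma proj2_mul (hA2 : ∀ s : S, ∃ r : R, (r, s) ∈ A)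
    (M N : Submodule ↥A (FractionRing R × FractionRing S)) :
    proj2 A hA2 (M * N) = proj2 A hA2 M * proj2 A hA2 N := by
  apply le_antisymm
  · intro x hx
    obtain ⟨p, hp, rfl⟩ := (mem_proj2 A hA2 _).1 hx
    refine Submodule.mul_induction_on hp (fun m hm n hn => ?_) (fun x y hx hy => ?_)
    · rw [Prod.snd_mul]
      exact Submodule.mul_mem_mul ((mem_proj2 A hA2 _).2 ⟨m, hm, rfl⟩)
        ((mem_proj2 A hA2 _).2 ⟨n, hn, rfl⟩)
    · rw [Prod.snd_add]
      exact Submodule.add_mem _ hx hy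
  · refine Submodule.mul_le.2 ?_
    intro x hx y hy
    obtain ⟨p, hp, rfl⟩ := (mem_proj2 A hA2 _).1 hx
    obtain ⟨q, hq, rfl⟩ := (mem_proj2 A hA2 _).1 hy
    exact (mem_proj2 A hA2 _).2 ⟨p * q, Submodule.mul_mem_mul hp hq, Prod.snd_mul p q⟩


end FPHelpers

section FiberProduct2

variable (R S : Type*) [CommRing R] [CommRing S]

/-- Claim on `X² = X³` for the canonical fractional ideal `X` of a fiber product
`A = R ×_k S` of one-dimensional CM local rings, neither a DVR. -/
theorem fiber_product_canonical_square_cube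
    [IsNoetherianRing R] [IsNoetherianRing S] [IsLocalRing R] [IsLocalRing S]
    (k : Type*) [Field k] [Infinite k]
    (hdimR : ringKrullDim R = 1) (hdimS : ringKrullDim S = 1)
    (hCMR : ∃ x ∈ maximalIdeal R, x ∈ nonZeroDivisors R)
    (hCMS : ∃ x ∈ maximalIdeal S, x ∈ nonZeroDivisors S)
    (f : R →+* k) (g : S →+* k)
    (hf : Function.Surjective f) (hg : Function.Surjective g)
    (hkf : RingHom.ker f = maximalIdeal R) (hkg : RingHom.ker g = maximalIdeal S)
    (hRdvr : ¬ ∃ h : IsDomain R, @IsDiscreteValuationRing R _ h)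
    (hSdvr : ¬ ∃ h : IsDomain S, @IsDiscreteValuationRing S _ h)
    (K : Submodule R (FractionRing R)) (hK : IsFracCanonical R (FractionRing R) K)
    (L : Submodule S (FractionRing S)) (hL : IsFracCanonical S (FractionRing S) L)
    (g₁ : FractionRing R)
    (hg₁mem : g₁ ∈ (1 : Submodule R (FractionRing R)) /
      Submodule.map (Algebra.linearMap R (FractionRing R)) (maximalIdeal R))
    (hg₁K : g₁ ∉ K)
    (hKm : K / Submodule.map (Algebra.linearMap R (FractionRing R)) (maximalIdeal R) =
      K ⊔ Submodule.span R {g₁})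
    (g₂ : FractionRing S)
    (hg₂mem : g₂ ∈ (1 : Submodule S (FractionRing S)) /
      Submodule.map (Algebra.linearMap S (FractionRing S)) (maximalIdeal S))
    (hg₂L : g₂ ∉ L)
    (hLm : L / Submodule.map (Algebra.linearMap S (FractionRing S)) (maximalIdeal S) =
      L ⊔ Submodule.span S {g₂})
    (A : Subring (R × S)) (hA : ∀ p : R × S, p ∈ A ↔ f p.1 = g p.2)
    (X : Submodule ↥A (FractionRing R × FractionRing S))
    (hX : X = Submodule.span ↥A
      (((K : Set (FractionRing R)) ×ˢ (L : Set (FractionRing S))) ∪ {(g₁, g₂)})) :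
    ((K ≠ 1 → L ≠ 1 → (X ^ 2 = X ^ 3 ↔ (K ^ 2 = K ^ 3 ∧ L ^ 2 = L ^ 3))) ∧
      (K = 1 → L ≠ 1 → (X ^ 2 = X ^ 3 ↔ L ^ 2 = L ^ 3))) := by
  obtain ⟨hKfg, hK1, hKint, hKdual⟩ := hK
  obtain ⟨hLfg, hL1, hLint, hLdual⟩ := hL
  have hA1 : ∀ r : R, ∃ s : S, (r, s) ∈ A := fun r => by
    obtain ⟨s, hs⟩ := hg (f r)
    exact ⟨s, (hA (r, s)).2 hs.symm⟩
  have hA2 : ∀ s : S, ∃ r : R, (r, s) ∈ A := fun s => by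
    obtain ⟨r, hr⟩ := hf (g s)
    exact ⟨r, (hA (r, s)).2 hr⟩
  have lemAR := lemA (R := R) hRdvr
  have lemAS := lemA (R := S) hSdvr
  obtain ⟨hGKR, hGGR, hg3R⟩ := sideBack K hK1 g₁ hg₁mem hKm lemAR
  obtain ⟨hGKS, hGGS, hg3S⟩ := sideBack L hL1 g₂ hg₂mem hLm lemAS
  set G : Submodule R (FractionRing R) := Submodule.span R {g₁} with hGdef
  set H : Submodule S (FractionRing S) := Submodule.span S {g₂} with hHdef
  have hXeq : X = Psub A K L ⊔
      Submodule.span ↥A {((g₁, g₂) : FractionRing R × FractionRing S)} := by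
    rw [hX, Submodule.span_union, span_prodset]
  have hPP : Psub A K L * Psub A K L = Psub A (K * K) (L * L) := Psub_mul A K K L L
  have hPT : Psub A K L * Submodule.span ↥A {((g₁, g₂) : FractionRing R × FractionRing S)}
      = Psub A (G * K) (H * L) := Psub_mul_span A K L (g₁, g₂)
  have hTT : Submodule.span ↥A {((g₁, g₂) : FractionRing R × FractionRing S)} *
      Submodule.span ↥A {((g₁, g₂) : FractionRing R × FractionRing S)}
      = Submodule.span ↥A {((g₁ * g₁, g₂ * g₂) : FractionRing R × FractionRing S)} := by
    rw [Submodule.span_mul_span, Set.singleton_mul_singleton, Prod.mk_mul_mk]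
  have hX2 : X * X = Psub A (K * K) (L * L) ⊔ Psub A (G * K) (H * L) ⊔
      Submodule.span ↥A {((g₁ * g₁, g₂ * g₂) : FractionRing R × FractionRing S)} := by
    rw [hXeq, Submodule.sup_mul, Submodule.mul_sup, Submodule.mul_sup, hPP, hPT,
      mul_comm (Submodule.span ↥A {((g₁, g₂) : FractionRing R × FractionRing S)}) (Psub A K L),
      hPT, hTT, ← sup_assoc, sup_right_idem]
  -- key one-sided inequalities
  have keyR : (G * K) * K ≤ K * K ⊔ G * K :=
    le_trans (mul_le_mul_left hGKR _) (le_of_eq (Submodule.sup_mul K G K))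
  have keyS : (H * L) * L ≤ L * L ⊔ H * L :=
    le_trans (mul_le_mul_left hGKS _) (le_of_eq (Submodule.sup_mul L H L))
  have hGG2 : G * G = Submodule.span R {g₁ * g₁} := by
    rw [hGdef, Submodule.span_mul_span, Set.singleton_mul_singleton]
  have hHH2 : H * H = Submodule.span S {g₂ * g₂} := by
    rw [hHdef, Submodule.span_mul_span, Set.singleton_mul_singleton]
  have keyR2 : Submodule.span R {g₁ * g₁} * K ≤ K * K ⊔ G * K := by
    rw [← hGG2]
    exact le_trans (mul_le_mul_left hGGR _) (le_of_eq (Submodule.sup_mul K G K))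
  have keyS2 : Submodule.span S {g₂ * g₂} * L ≤ L * L ⊔ H * L := by
    rw [← hHH2]
    exact le_trans (mul_le_mul_left hGGS _) (le_of_eq (Submodule.sup_mul L H L))
  have keyR3 : G * (K * K) ≤ K * K ⊔ G * K := by
    rw [← mul_assoc]; exact keyR
  have keyS3 : H * (L * L) ≤ L * L ⊔ H * L := by
    rw [← mul_assoc]; exact keyS
  have keyR4 : G * (G * K) ≤ K * K ⊔ G * K := by
    rw [← mul_assoc]
    exact le_trans (mul_le_mul_left hGGR _) (le_of_eq (Submodule.sup_mul K G K))
  have keyS4 : H * (H * L) ≤ L * L ⊔ H * L := by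
    rw [← mul_assoc]
    exact le_trans (mul_le_mul_left hGGS _) (le_of_eq (Submodule.sup_mul L H L))
  have hKle2 : K ≤ K * K := by
    calc K = 1 * K := (one_mul K).symm
      _ ≤ K * K := mul_le_mul_left hK1 _
  have hLle2 : L ≤ L * L := by
    calc L = 1 * L := (one_mul L).symm
      _ ≤ L * L := mul_le_mul_left hL1 _
  have hGle2 : G ≤ G * K := by
    calc G = G * 1 := (mul_one G).symm
      _ ≤ G * K := mul_le_mul_right hK1 _
  have hHle2 : H ≤ H * L := by
    calc H = H * 1 := (mul_one H).symm
      _ ≤ H * L := mul_le_mul_right hL1 _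
  -- forward directions
  have forwardR : X ^ 2 = X ^ 3 → K ≠ 1 → K * K = K * K * K := by
    intro h23 hKne
    have hXX : X * X = X * X * X := by
      have e2 : X ^ 2 = X * X := by ring
      have e3 : X ^ 3 = X * X * X := by ring
      rw [← e3, ← e2]; exact h23
    have hp := congrArg (proj1 A hA1) hXX
    simp only [proj1_mul] at hp
    have hPX : proj1 A hA1 X = K ⊔ G := by
      rw [hXeq, proj1_sup, proj1_Psub, proj1_span_singleton]
    rw [hPX] at hp
    exact sideForward K hKfg hK1 hKint hKdual g₁ hg₁mem hg₁K hKm hKne lemAR hp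
  have forwardS : X ^ 2 = X ^ 3 → L ≠ 1 → L * L = L * L * L := by
    intro h23 hLne
    have hXX : X * X = X * X * X := by
      have e2 : X ^ 2 = X * X := by ring
      have e3 : X ^ 3 = X * X * X := by ring
      rw [← e3, ← e2]; exact h23
    have hp := congrArg (proj2 A hA2) hXX
    simp only [proj2_mul] at hp
    have hPX : proj2 A hA2 X = L ⊔ H := by
      rw [hXeq, proj2_sup, proj2_Psub, proj2_span_singleton]
    rw [hPX] at hp
    exact sideForward L hLfg hL1 hLint hLdual g₂ hg₂mem hg₂L hLm hLne lemAS hp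
  -- backward direction
  have backward : K * K = K * K * K → L * L = L * L * L → X ^ 2 = X ^ 3 := by
    intro hK23 hL23
    suffices hs : X * X = X * X * X by
      have e2 : X ^ 2 = X * X := by ring
      have e3 : X ^ 3 = X * X * X := by ring
      rw [e2, e3]; exact hs
    apply le_antisymm
    · intro z hz
      have h11 : ((1, 1) : FractionRing R × FractionRing S) ∈ X := by
        rw [hXeq]
        exact (le_sup_left : Psub A K L ≤ _)
          (⟨Submodule.one_le.1 hK1, Submodule.one_le.1 hL1⟩ :
            ((1 : FractionRing R), (1 : FractionRing S)) ∈ Psub A K L)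
      have hz1 : z = z * (1, 1) := by
        have he : ((1, 1) : FractionRing R × FractionRing S) = 1 := rfl
        rw [he, mul_one]
      rw [hz1]
      exact Submodule.mul_mem_mul hz h11
    · rw [hX2, hXeq, Submodule.mul_sup]
      refine sup_le ?_ ?_
      · rw [Submodule.sup_mul, Submodule.sup_mul]
        refine sup_le (sup_le ?_ ?_) ?_
        · rw [Psub_mul, ← hK23, ← hL23]
          exact le_trans le_sup_left le_sup_left
        · rw [Psub_mul]
          refine le_trans (Psub_mono A keyR keyS) ?_
          rw [Psub_sup]
          exact le_sup_left
        · rw [mul_comm, Psub_mul_span]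
          refine le_trans (Psub_mono A keyR2 keyS2) ?_
          rw [Psub_sup]
          exact le_sup_left
      · rw [Submodule.sup_mul, Submodule.sup_mul]
        refine sup_le (sup_le ?_ ?_) ?_
        · rw [Psub_mul_span]
          refine le_trans (Psub_mono A keyR3 keyS3) ?_
          rw [Psub_sup]
          exact le_sup_left
        · rw [Psub_mul_span]
          refine le_trans (Psub_mono A keyR4 keyS4) ?_
          rw [Psub_sup]
          exact le_sup_left
        · rw [Submodule.span_mul_span, Set.singleton_mul_singleton, Prod.mk_mul_mk,
            Submodule.span_le, Set.singleton_subset_iff]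
          refine (le_sup_left :
            Psub A (K * K) (L * L) ⊔ Psub A (G * K) (H * L) ≤ _) ?_
          rw [Psub_sup]
          exact ⟨(sup_le_sup hKle2 hGle2) (hg3R), (sup_le_sup hLle2 hHle2) (hg3S)⟩
  constructor
  · intro hKne hLne
    constructor
    · intro h23
      constructor
      · have h := forwardR h23 hKne
        have e2 : K ^ 2 = K * K := by ring
        have e3 : K ^ 3 = K * K * K := by ring
        rw [e2, e3]; exact h
      · have h := forwardS h23 hLne
        have e2 : L ^ 2 = L * L := by ring
        have e3 : L ^ 3 = L * L * L := by ring
        rw [e2, e3]; exact h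
    · rintro ⟨hK23, hL23⟩
      refine backward ?_ ?_
      · have e2 : K ^ 2 = K * K := by ring
        have e3 : K ^ 3 = K * K * K := by ring
        rw [← e3, ← e2]; exact hK23
      · have e2 : L ^ 2 = L * L := by ring
        have e3 : L ^ 3 = L * L * L := by ring
        rw [← e3, ← e2]; exact hL23
  · intro hKeq hLne
    constructor
    · intro h23
      have h := forwardS h23 hLne
      have e2 : L ^ 2 = L * L := by ring
      have e3 : L ^ 3 = L * L * L := by ring
      rw [e2, e3]; exact h
    · intro hL23
      refine backward ?_ ?_
      · rw [hKeq]; simp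
      · have e2 : L ^ 2 = L * L := by ring
        have e3 : L ^ 3 = L * L * L := by ring
        rw [← e3, ← e2]; exact hL23

end FiberProduct2
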